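/- Suppose γ_S(n−1) ≥ C·e^{b·n^α} for all integers n ≥ 1, with constants C > 0, b > 0, 0 < α ≤ 1. Then there is a function μ : ℝ₊ → ℝ with μ(v) → 1 as v → ∞ such that every nonempty finite D ⊆ Γ satisfies Card(∂_S D) ≥ μ(Card(D)) · Card(D) / ((1/b)·log(Card(D)))^{1/α}. -/

import Mathlib

open Set Filter

/-- The ball of radius `n` in the word metric: elements expressible as a product
of at most `n` elements of `S`. -/
def wordBall {G : Type*} [Group G] (S : Set G) (n : ℕ) : Set G :=
  {x | ∃ l : List G, l.length ≤ n ∧ (∀ s ∈ l, s ∈ S) ∧ l.prod = x}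

/-- The growth function `γ_S(n) = Card(B_S(n))`. -/
noncomputable def growth {G : Type*} [Group G] (S : Set G) (n : ℕ) : ℕ :=
  (wordBall S n).ncard

/-- The word norm `‖x‖_S`. -/
noncomputable def wordNorm {G : Type*} [Group G] (S : Set G) (x : G) : ℕ :=
  sInf {n | x ∈ wordBall S n}

/-- The reverse growth function `φ_S(t) = min {n | γ_S(n) ≥ t}`. -/
noncomputable def phiS {G : Type*} [Group G] (S : Set G) (t : ℝ) : ℕ :=
  sInf {n | t ≤ (growth S n : ℝ)}

/-- The interior boundary `∂_S D`. -/
def intBoundary {G : Type*} [Group G] (S : Set G) (D : Set G) : Set G :=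
  {x ∈ D | ∃ s ∈ S, s * x ∉ D}

/-- The exterior boundary `∂'_S D`. -/
def extBoundary {G : Type*} [Group G] (S : Set G) (D : Set G) : Set G :=
  {x | x ∉ D ∧ ∃ s ∈ S, s * x ∈ D}


lemma wordBall_mono {G : Type*} [Group G] (S : Set G) {m n : ℕ} (h : m ≤ n) :
    wordBall S m ⊆ wordBall S n := by
  rintro x ⟨l, hl, hs, hp⟩
  exact ⟨l, hl.trans h, hs, hp⟩

lemma wordBall_finite {G : Type*} [Group G] {S : Set G} (hS : S.Finite) :
    ∀ n : ℕ, (wordBall S n).Finite := by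
  intro n
  induction n with
  | zero =>
    apply Set.Finite.subset (Set.finite_singleton (1 : G))
    rintro x ⟨l, hl, -, hp⟩
    simp only [Nat.le_zero, List.length_eq_zero_iff] at hl
    simp [hl] at hp
    simp [← hp]
  | succ n ih =>
    apply Set.Finite.subset (ih.union ((hS.image2 (· * ·) ih)))
    rintro x ⟨l, hl, hs, hp⟩
    match l with
    | [] => exact Or.inl ⟨[], by simp, by simp, by simpa using hp⟩
    | a :: t =>
      right
      refine ⟨a, hs a (by simp), t.prod, ⟨t, by simpa using hl, fun s hs' => hs s (by simp [hs']), rfl⟩, by simpa using hp⟩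

lemma step_lemma {G : Type*} [Group G] [DecidableEq G] (S : Set G) (D : Finset G)
    (l : List G) (hl : ∀ s ∈ l, s ∈ S) (Bd : Finset G)
    (hBd : intBoundary S (D : Set G) ⊆ ↑Bd) :
    (D.filter (fun x => l.prod * x ∉ D)).card ≤ l.length * Bd.card := by
  classical
  have Qex : ∀ x : G, ∃ j, ((l.drop j).prod * x ∈ D ∨ j = l.length) :=
    fun x => ⟨l.length, Or.inr rfl⟩
  set jf : G → ℕ := fun x => Nat.find (Qex x) with hjf
  have hjle : ∀ x, jf x ≤ l.length := fun x => Nat.find_le (Or.inr rfl)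
  set Φ : G → ℕ × G := fun x => (jf x - 1, (l.drop (jf x)).prod * x) with hΦ
  have key : ∀ x ∈ D.filter (fun x => l.prod * x ∉ D),
      1 ≤ jf x ∧ (l.drop (jf x)).prod * x ∈ D ∧
        (l.drop (jf x - 1)).prod * x ∉ D := by
    intro x hx
    simp only [Finset.mem_filter] at hx
    obtain ⟨hxD, hxout⟩ := hx
    have h1 : 1 ≤ jf x := by
      rcases Nat.eq_zero_or_pos (jf x) with h0 | h
      · exfalso
        have hsp := Nat.find_spec (Qex x)
        rw [show Nat.find (Qex x) = jf x from rfl, h0] at hsp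
        rcases hsp with h | h
        · simp at h; exact hxout h
        · have : l = [] := List.length_eq_zero_iff.mp h.symm
          rw [this] at hxout
          simp at hxout
          exact hxout hxD
      · exact h
    refine ⟨h1, ?_, ?_⟩
    · have hsp := Nat.find_spec (Qex x)
      rcases hsp with h | h
      · exact h
      · have : jf x = l.length := h
        rw [this, List.drop_length]
        simpa using hxD
    · have hmin := Nat.find_min (Qex x) (show jf x - 1 < jf x by omega)
      push_neg at hmin
      exact hmin.1
  have hmem : ∀ x ∈ D.filter (fun x => l.prod * x ∉ D),
      Φ x ∈ Finset.range l.length ×ˢ Bd := by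
    intro x hx
    obtain ⟨h1, hin, hout⟩ := key x hx
    have hjne : jf x - 1 ≠ l.length := by
      have hmin := Nat.find_min (Qex x) (show jf x - 1 < jf x by omega)
      push_neg at hmin
      exact hmin.2
    have hjk : jf x - 1 < l.length := by
      have := hjle x
      omega
    simp only [Finset.mem_product, Finset.mem_range]
    refine ⟨hjk, ?_⟩
    apply hBd
    refine ⟨hin, l[jf x - 1]'hjk, hl _ (List.getElem_mem _), ?_⟩
    have hdrop : l.drop (jf x - 1) = l[jf x - 1] :: l.drop (jf x) := by
      have h11 : jf x - 1 + 1 = jf x := by omega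
      rw [List.drop_eq_getElem_cons hjk, h11]
    intro hcon
    apply hout
    rw [hdrop]
    simpa [mul_assoc] using hcon
  have hinj : Set.InjOn Φ ↑(D.filter (fun x => l.prod * x ∉ D)) := by
    intro x1 hx1 x2 hx2 heq
    simp only [hΦ, Prod.mk.injEq] at heq
    obtain ⟨he1, he2⟩ := heq
    have h11 := (key x1 hx1).1
    have h12 := (key x2 hx2).1
    have : jf x1 = jf x2 := by omega
    rw [this] at he2
    exact mul_left_cancel he2
  calc (D.filter (fun x => l.prod * x ∉ D)).card
      ≤ (Finset.range l.length ×ˢ Bd).card := Finset.card_le_card_of_injOn Φ hmem hinj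
    _ = l.length * Bd.card := by rw [Finset.card_product, Finset.card_range]

lemma avg_lemma {G : Type*} [Group G] [DecidableEq G] (B D : Finset G) (hB : B.Nonempty) :
    ∃ g ∈ B, B.card * (D.filter (fun x => g * x ∈ D)).card ≤ D.card * D.card := by
  classical
  have hsum : ∑ g ∈ B, (D.filter (fun x => g * x ∈ D)).card ≤ D.card * D.card := by
    calc ∑ g ∈ B, (D.filter (fun x => g * x ∈ D)).card
        = ∑ g ∈ B, ∑ x ∈ D, if g * x ∈ D then 1 else 0 := by
          refine Finset.sum_congr rfl fun g _ => Finset.card_filter _ _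
      _ = ∑ x ∈ D, ∑ g ∈ B, if g * x ∈ D then 1 else 0 := Finset.sum_comm
      _ = ∑ x ∈ D, (B.filter (fun g => g * x ∈ D)).card := by
          refine Finset.sum_congr rfl fun x _ => (Finset.card_filter _ _).symm
      _ ≤ ∑ _x ∈ D, D.card := by
          apply Finset.sum_le_sum
          intro x hx
          apply Finset.card_le_card_of_injOn (fun g => g * x)
          · intro g hg
            exact (Finset.mem_filter.mp hg).2
          · intro g1 _ g2 _ h
            exact mul_right_cancel h
      _ = D.card * D.card := by rw [Finset.sum_const, smul_eq_mul]
  apply Finset.exists_le_of_sum_le hB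
  calc ∑ g ∈ B, B.card * (D.filter (fun x => g * x ∈ D)).card
      = B.card * ∑ g ∈ B, (D.filter (fun x => g * x ∈ D)).card := by
        rw [Finset.mul_sum]
    _ ≤ B.card * (D.card * D.card) := Nat.mul_le_mul_left _ hsum
    _ = ∑ _g ∈ B, D.card * D.card := by rw [Finset.sum_const, smul_eq_mul]

noncomputable def KK (v : ℝ) : ℝ := max 1 (Real.log v)
noncomputable def MM (C b : ℝ) (v : ℝ) : ℝ := (1/b) * Real.log (KK v * v / C)
noncomputable def nn (C b α : ℝ) (v : ℝ) : ℕ := max ⌈(MM C b v) ^ (1/α)⌉₊ 1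
noncomputable def muu (C b α : ℝ) (v : ℝ) : ℝ :=
  (1 - 1/(KK v)) * (((1/b) * Real.log v) ^ (1/α) / (nn C b α v : ℝ))

lemma KK_pos (v : ℝ) : 0 < KK v := lt_of_lt_of_le one_pos (le_max_left _ _)

lemma tendsto_KK : Tendsto KK atTop atTop := by
  apply tendsto_atTop_mono' _ _ Real.tendsto_log_atTop
  filter_upwards with v using le_max_right _ _

lemma tendsto_muu {C b α : ℝ} (hC : 0 < C) (hb : 0 < b) (hα : 0 < α) :
    Tendsto (muu C b α) atTop (nhds 1) := by
  have hL : Tendsto (fun v => (1/b) * Real.log v) atTop atTop :=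
    (Real.tendsto_log_atTop.const_mul_atTop (by positivity))
  have hKv : Tendsto (fun v => KK v * v / C) atTop atTop :=
    Tendsto.atTop_div_const hC (tendsto_KK.atTop_mul_atTop₀ tendsto_id)
  have hM : Tendsto (fun v => MM C b v) atTop atTop :=
    (Real.tendsto_log_atTop.comp hKv).const_mul_atTop (by positivity)
  have hMr : Tendsto (fun v => MM C b v ^ (1/α)) atTop atTop :=
    (tendsto_rpow_atTop (by positivity)).comp hM
  have hA : Tendsto (fun v => 1 - 1/(KK v)) atTop (nhds 1) := by
    have h := (tendsto_const_nhds (x := (1:ℝ))).sub tendsto_KK.inv_tendsto_atTop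
    simpa [one_div] using h
  have hratio : Tendsto (fun v => (1/b) * Real.log v / MM C b v) atTop (nhds 1) := by
    have hden : Tendsto (fun v => Real.log (Real.log v) / Real.log v + 1 - Real.log C / Real.log v)
        atTop (nhds 1) := by
      have h1 : Tendsto (fun v => Real.log (Real.log v) / Real.log v) atTop (nhds 0) := by
        have := Real.isLittleO_log_id_atTop.tendsto_div_nhds_zero
        simpa [Function.comp_def] using this.comp Real.tendsto_log_atTop
      have h2 : Tendsto (fun v => Real.log C / Real.log v) atTop (nhds 0) :=
        tendsto_const_nhds.div_atTop Real.tendsto_log_atTop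
      simpa using (h1.add tendsto_const_nhds).sub h2
    have h := (tendsto_const_nhds (x := (1:ℝ))).div hden one_ne_zero
    rw [div_one] at h
    apply h.congr'
    filter_upwards [Real.tendsto_log_atTop.eventually_ge_atTop 1,
      eventually_gt_atTop 0] with v hv hv0
    have hlv : 0 < Real.log v := lt_of_lt_of_le one_pos hv
    have hK : KK v = Real.log v := max_eq_right hv
    have hMne : MM C b v = (1/b) * (Real.log (Real.log v) + Real.log v - Real.log C) := by
      rw [MM, hK, Real.log_div (by positivity) (ne_of_gt hC),
        Real.log_mul (ne_of_gt hlv) (ne_of_gt hv0)]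
    rw [hMne]
    rw [Pi.div_apply]
    field_simp
  have hg2 : Tendsto (fun v => ((1/b) * Real.log v / MM C b v) ^ (1/α)) atTop (nhds 1) := by
    have hc : ContinuousAt (fun t : ℝ => t ^ (1/α)) 1 :=
      Real.continuousAt_rpow_const 1 (1/α) (Or.inl one_ne_zero)
    have := hc.tendsto.comp hratio
    simpa [Function.comp_def] using this
  have hfr : Tendsto (fun v => MM C b v ^ (1/α) / (MM C b v ^ (1/α) + 1)) atTop (nhds 1) := by
    have h1 : Tendsto (fun v => 1 - (MM C b v ^ (1/α) + 1)⁻¹) atTop (nhds 1) := by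
      have h := (tendsto_const_nhds (x := (1:ℝ))).sub
        (hMr.atTop_add (tendsto_const_nhds (x := (1:ℝ)))).inv_tendsto_atTop
      simpa using h
    apply h1.congr'
    filter_upwards [hMr.eventually_ge_atTop 1] with v hv
    have h0 : MM C b v ^ (1/α) + 1 ≠ 0 := by positivity
    field_simp
    ring
  have hEv : ∀ᶠ v in atTop,
      ((1/b) * Real.log v / MM C b v) ^ (1/α) * (MM C b v ^ (1/α) / (MM C b v ^ (1/α) + 1))
        ≤ ((1/b) * Real.log v) ^ (1/α) / (nn C b α v : ℝ) ∧
      ((1/b) * Real.log v) ^ (1/α) / (nn C b α v : ℝ)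
        ≤ ((1/b) * Real.log v / MM C b v) ^ (1/α) := by
    have hML : ∀ᶠ v in atTop, (1/b) * Real.log v ≤ MM C b v := by
      filter_upwards [Real.tendsto_log_atTop.eventually_ge_atTop 1, eventually_gt_atTop 0,
        (Real.tendsto_log_atTop.comp Real.tendsto_log_atTop).eventually_ge_atTop (Real.log C)]
        with v hv hv0 hvC
      have hlv : 0 < Real.log v := lt_of_lt_of_le one_pos hv
      have hK : KK v = Real.log v := max_eq_right hv
      have hMne : MM C b v = (1/b) * (Real.log (Real.log v) + Real.log v - Real.log C) := by
        rw [MM, hK, Real.log_div (by positivity) (ne_of_gt hC),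
          Real.log_mul (ne_of_gt hlv) (ne_of_gt hv0)]
      rw [hMne]
      have : Real.log C ≤ Real.log (Real.log v) := hvC
      have hbinv : (0:ℝ) < 1/b := by positivity
      nlinarith
    filter_upwards [hMr.eventually_ge_atTop 1, hL.eventually_ge_atTop 0,
      hM.eventually_ge_atTop 1, hML] with v h1 h2 h3 hLM
    have hM0 : (0:ℝ) < MM C b v := by linarith
    have hMα : (0:ℝ) < MM C b v ^ (1/α) := by linarith
    have hLα : (0:ℝ) ≤ ((1/b) * Real.log v) ^ (1/α) := Real.rpow_nonneg h2 _
    have hnn : (nn C b α v : ℝ) = (⌈(MM C b v) ^ (1/α)⌉₊ : ℝ) := by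
      rw [nn]
      norm_cast
      exact max_eq_left (Nat.one_le_ceil_iff.mpr (by linarith))
    have hn1 : MM C b v ^ (1/α) ≤ (nn C b α v : ℝ) := by
      rw [hnn]; exact Nat.le_ceil _
    have hn2 : (nn C b α v : ℝ) ≤ MM C b v ^ (1/α) + 1 := by
      rw [hnn]; exact le_of_lt (Nat.ceil_lt_add_one (by positivity))
    have hn0 : (0:ℝ) < (nn C b α v : ℝ) := by linarith
    have hdivr : ((1/b) * Real.log v / MM C b v) ^ (1/α)
        = ((1/b) * Real.log v) ^ (1/α) / MM C b v ^ (1/α) :=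
      Real.div_rpow h2 hM0.le _
    constructor
    · rw [hdivr, div_mul_div_comm, div_le_div_iff₀ (by positivity) hn0]
      have : MM C b v ^ (1/α) * MM C b v ^ (1/α) ≥ (nn C b α v : ℝ) * MM C b v ^ (1/α) - MM C b v ^ (1/α) := by
        nlinarith
      nlinarith
    · rw [hdivr]
      gcongr
  have hR : Tendsto (fun v => ((1/b) * Real.log v) ^ (1/α) / (nn C b α v : ℝ)) atTop (nhds 1) := by
    refine tendsto_of_tendsto_of_tendsto_of_le_of_le' (by simpa using hg2.mul hfr) hg2
      (hEv.mono fun v h => h.1) (hEv.mono fun v h => h.2)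
  have h := hA.mul hR
  rw [mul_one] at h
  exact h.congr fun v => by rw [muu]

theorem stmt_14 {G : Type*} [Group G] [Infinite G] (S : Set G) (hSfin : S.Finite)
    (hSsym : ∀ s ∈ S, s⁻¹ ∈ S) (hSgen : Subgroup.closure S = ⊤)
    (C b α : ℝ) (hC : 0 < C) (hb : 0 < b) (hα : 0 < α) (hα1 : α ≤ 1)
    (hgrowth : ∀ n : ℕ, 1 ≤ n →
      C * Real.exp (b * (n : ℝ) ^ α) ≤ (growth S (n - 1) : ℝ)) :
    ∃ μ : ℝ → ℝ, Tendsto μ atTop (nhds 1) ∧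
      ∀ (D : Set G), D.Finite → D.Nonempty →
        ((intBoundary S D).ncard : ℝ) ≥
          μ (D.ncard : ℝ) * (D.ncard : ℝ) /
            ((1 / b) * Real.log (D.ncard : ℝ)) ^ (1 / α) := by
  classical
  refine ⟨muu C b α, tendsto_muu hC hb hα, ?_⟩
  intro D hDfin hDne
  have hv1 : 1 ≤ D.ncard := (Set.ncard_pos hDfin).mpr hDne
  by_cases hv2 : 2 ≤ D.ncard
  swap
  · -- ncard = 1
    have h1 : D.ncard = 1 := by omega
    rw [h1, ge_iff_le]
    simp only [Nat.cast_one, Real.log_one, mul_zero]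
    rw [Real.zero_rpow (one_div_ne_zero hα.ne'), div_zero]
    positivity
  · set v : ℝ := (D.ncard : ℝ) with hvdef
    have hv2' : (2:ℝ) ≤ v := by rw [hvdef]; exact_mod_cast hv2
    have hv0 : (0:ℝ) < v := by linarith
    have hlogv : 0 < Real.log v := Real.log_pos (by linarith)
    have hK1 : 1 ≤ KK v := le_max_left _ _
    have hK0 : (0:ℝ) < KK v := by linarith
    set n : ℕ := nn C b α v with hndef
    have hn1 : 1 ≤ n := le_max_right _ _
    -- growth lower bound
    have hgrow : KK v * v ≤ (growth S n : ℝ) := by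
      have h := hgrowth (n+1) (by omega)
      rw [Nat.add_sub_cancel] at h
      refine le_trans ?_ h
      have hT : 0 < KK v * v / C := by positivity
      have hlogT : Real.log (KK v * v / C) = b * MM C b v := by
        rw [MM]; field_simp
      have hMle : MM C b v ≤ ((n+1 : ℕ) : ℝ) ^ α := by
        rcases le_or_gt (MM C b v) 0 with hM0 | hM0
        · exact le_trans hM0 (Real.rpow_nonneg (by positivity) _)
        · have hceil : (MM C b v) ^ (1/α) ≤ (n : ℝ) := by
            refine le_trans (Nat.le_ceil _) ?_
            exact_mod_cast le_max_left _ _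
          have hle : (MM C b v) ^ (1/α) ≤ ((n+1 : ℕ) : ℝ) := by
            push_cast
            push_cast at hceil
            linarith
          calc MM C b v = ((MM C b v) ^ (1/α)) ^ α := by
                rw [← Real.rpow_mul hM0.le, one_div,
                  inv_mul_cancel₀ hα.ne', Real.rpow_one]
            _ ≤ ((n+1 : ℕ) : ℝ) ^ α :=
                Real.rpow_le_rpow (Real.rpow_nonneg hM0.le _) hle hα.le
      calc KK v * v = C * (KK v * v / C) := by field_simp
        _ = C * Real.exp (Real.log (KK v * v / C)) := by rw [Real.exp_log hT]
        _ ≤ C * Real.exp (b * ((n+1 : ℕ) : ℝ) ^ α) := by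
            refine mul_le_mul_of_nonneg_left (Real.exp_le_exp.mpr ?_) hC.le
            rw [hlogT]
            exact mul_le_mul_of_nonneg_left hMle hb.le
    -- finsets
    have hBfin := wordBall_finite hSfin n
    set Bf := hBfin.toFinset with hBf
    set Df := hDfin.toFinset with hDf
    have hDcard : (Df.card : ℝ) = v := by
      rw [hvdef, Set.ncard_eq_toFinset_card D hDfin]
    have hBcard : Bf.card = growth S n := by
      rw [growth, Set.ncard_eq_toFinset_card _ hBfin]
    have hBfR : KK v * v ≤ (Bf.card : ℝ) := by rw [hBcard]; exact hgrow
    have hBpos : Bf.Nonempty := by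
      rw [← Finset.card_pos]
      by_contra hcon
      push_neg at hcon
      have h0 : Bf.card = 0 := by omega
      rw [h0] at hBfR
      push_cast at hBfR
      nlinarith
    obtain ⟨g, hgB, havg⟩ := avg_lemma Bf Df hBpos
    have hbdfin : (intBoundary S D).Finite := hDfin.subset (fun x hx => hx.1)
    set Bd := hbdfin.toFinset with hBd
    have hgW : g ∈ wordBall S n := by
      rw [hBf] at hgB
      exact (Set.Finite.mem_toFinset _).mp hgB
    obtain ⟨l, hlen, hlS, hlprod⟩ := hgW
    have hstep : (Df.filter (fun x => g * x ∉ Df)).card ≤ n * Bd.card := by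
      have h := step_lemma S Df l hlS Bd (by
        rw [hBd, hDf, Set.Finite.coe_toFinset, Set.Finite.coe_toFinset])
      rw [hlprod] at h
      exact le_trans h (Nat.mul_le_mul_right _ hlen)
    have hpart : (Df.filter (fun x => g * x ∈ Df)).card
        + (Df.filter (fun x => g * x ∉ Df)).card = Df.card :=
      Finset.card_filter_add_card_filter_not _
    -- real arithmetic
    set F : ℝ := ((Df.filter (fun x => g * x ∈ Df)).card : ℝ) with hF
    set E : ℝ := ((Df.filter (fun x => g * x ∉ Df)).card : ℝ) with hE
    set P : ℝ := ((intBoundary S D).ncard : ℝ) with hP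
    have hPBd : P = (Bd.card : ℝ) := by
      rw [hP, Set.ncard_eq_toFinset_card _ hbdfin]
    have hF0 : 0 ≤ F := by positivity
    have havgR : (Bf.card : ℝ) * F ≤ v * v := by
      rw [hF, ← hDcard]; exact_mod_cast havg
    have hFv : F ≤ v / KK v := by
      rw [le_div_iff₀ hK0]
      nlinarith [mul_le_mul_of_nonneg_right hBfR hF0]
    have hpartR : F + E = v := by rw [hF, hE, ← hDcard]; exact_mod_cast hpart
    have hstepR : E ≤ (n : ℝ) * P := by rw [hE, hPBd]; exact_mod_cast hstep
    -- conclude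
    have hn0 : (0:ℝ) < (n : ℝ) := by exact_mod_cast hn1
    have hgoal : muu C b α v * v / ((1/b) * Real.log v) ^ (1/α)
        = (1 - 1/(KK v)) * v / (n : ℝ) := by
      have hz : (0:ℝ) < ((1/b) * Real.log v) ^ (1/α) :=
        Real.rpow_pos_of_pos (by positivity) _
      rw [muu, ← hndef]
      field_simp
    rw [ge_iff_le, hgoal, div_le_iff₀ hn0]
    have h1 : (1 - 1/(KK v)) * v = v - v / KK v := by field_simp
    linarith
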